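/- Let f = x1² − 2x1x2 + x2² − 2x1x3 − 2x2x3 + x3² ∈ ℂ[x1,x2,x3], the defining equation of the Cayley–Menger variety (the determinant of the 2×2 Cayley–Menger matrix with entries 2x2, x2+x3−x1, x2+x3−x1, 2x3). Then the dual variety satisfies V(f)* = V(x1x2 + x1x3 + x2x3) = {y ∈ ℂ³ : y1y2 + y1y3 + y2y3 = 0}. -/

import Mathlib

open MvPolynomial Pointwise

/-- Gradient of a multivariate polynomial at a point. -/
noncomputable def grad {n : ℕ} (f : MvPolynomial (Fin n) ℂ) (x : Fin n → ℂ) : Fin n → ℂ :=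
  fun i => eval x (pderiv i f)

/-- Zariski closure: zero locus of the ideal of all polynomials vanishing on `S`. -/
def zclosure {σ : Type} (S : Set (σ → ℂ)) : Set (σ → ℂ) :=
  {x | ∀ p : MvPolynomial σ ℂ, (∀ s ∈ S, eval s p = 0) → eval x p = 0}

/-- Zero locus `V(f)`. -/
def Vp {n : ℕ} (f : MvPolynomial (Fin n) ℂ) : Set (Fin n → ℂ) := {x | eval x f = 0}

/-- Regular locus. -/
def RegL {n : ℕ} (f : MvPolynomial (Fin n) ℂ) : Set (Fin n → ℂ) :=
  {x | eval x f = 0 ∧ grad f x ≠ 0}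

/-- Singular locus. -/
def SingL {n : ℕ} (f : MvPolynomial (Fin n) ℂ) : Set (Fin n → ℂ) :=
  {x | eval x f = 0 ∧ grad f x = 0}

/-- ED correspondence: Zariski closure of pairs (u,x), x regular, u - x ∈ ℂ·∇f(x),
encoded as functions on `Fin n ⊕ Fin n`. -/
def EDcorr {n : ℕ} (f : MvPolynomial (Fin n) ℂ) : Set ((Fin n ⊕ Fin n) → ℂ) :=
  zclosure {w | ∃ u x : Fin n → ℂ, w = Sum.elim u x ∧ x ∈ RegL f ∧ ∃ t : ℂ, u - x = t • grad f x}

/-- ED data singular locus. -/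
def DS {n : ℕ} (f : MvPolynomial (Fin n) ℂ) : Set (Fin n → ℂ) :=
  {u | ∃ x, Sum.elim u x ∈ EDcorr f ∧ x ∈ SingL f}

/-- Dual variety. -/
def dualV {n : ℕ} (f : MvPolynomial (Fin n) ℂ) : Set (Fin n → ℂ) :=
  zclosure {y | ∃ (t : ℂ) (x : Fin n → ℂ), x ∈ RegL f ∧ y = t • grad f x}

/-- Isotropic quadric. -/
def isoQ (n : ℕ) : Set (Fin n → ℂ) := {x | ∑ i, (x i) ^ 2 = 0}

/-- ED data isotropic locus. -/
def DI {n : ℕ} (f : MvPolynomial (Fin n) ℂ) : Set (Fin n → ℂ) :=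
  {u | ∃ x, Sum.elim u x ∈ EDcorr f ∧ x ∈ isoQ n ∩ Vp f}

/-- Zariski-closed sets. -/
def IsZClosed {σ : Type} (S : Set (σ → ℂ)) : Prop := zclosure S = S

/-- Irreducibility with respect to Zariski-closed sets. -/
def IsZIrreducible {σ : Type} (S : Set (σ → ℂ)) : Prop :=
  S.Nonempty ∧ ∀ C₁ C₂ : Set (σ → ℂ), IsZClosed C₁ → IsZClosed C₂ →
    S ⊆ C₁ ∪ C₂ → S ⊆ C₁ ∨ S ⊆ C₂

/-- `C` is an irreducible component of `S`. -/
def IsIrredComponentOf {σ : Type} (C S : Set (σ → ℂ)) : Prop :=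
  C ⊆ S ∧ IsZClosed C ∧ IsZIrreducible C ∧
    ∀ C' : Set (σ → ℂ), IsZClosed C' → IsZIrreducible C' → C ⊆ C' → C' ⊆ S → C' = C


lemma pderiv_two {n : ℕ} (i : Fin n) : pderiv i (2 : MvPolynomial (Fin n) ℂ) = 0 := by
  rw [show (2 : MvPolynomial (Fin n) ℂ) = C 2 from (map_ofNat C 2).symm]
  simp

lemma grad_cm (x : Fin 3 → ℂ) :
    grad (X 0 ^ 2 - 2 * X 0 * X 1 + X 1 ^ 2 - 2 * X 0 * X 2 - 2 * X 1 * X 2 + X 2 ^ 2 :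
        MvPolynomial (Fin 3) ℂ) x =
    ![2*x 0 - 2*x 1 - 2*x 2, -2*x 0 + 2*x 1 - 2*x 2, -2*x 0 - 2*x 1 + 2*x 2] := by
  funext i
  fin_cases i <;> simp [grad, pderiv_X, pderiv_two, Pi.single_apply] <;> ring

lemma eval_cm (x : Fin 3 → ℂ) :
    eval x (X 0 ^ 2 - 2 * X 0 * X 1 + X 1 ^ 2 - 2 * X 0 * X 2 - 2 * X 1 * X 2 + X 2 ^ 2 :
        MvPolynomial (Fin 3) ℂ) =
    x 0 ^ 2 - 2*x 0*x 1 + x 1 ^ 2 - 2*x 0*x 2 - 2*x 1*x 2 + x 2 ^ 2 := by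
  simp

/-- The dual variety of the Cayley–Menger variety
`V(x₁² - 2x₁x₂ + x₂² - 2x₁x₃ - 2x₂x₃ + x₃²)` is `V(x₁x₂ + x₁x₃ + x₂x₃)`. -/
theorem dual_cayley_menger :
    dualV (X 0 ^ 2 - 2 * X 0 * X 1 + X 1 ^ 2 - 2 * X 0 * X 2 - 2 * X 1 * X 2 + X 2 ^ 2 :
        MvPolynomial (Fin 3) ℂ) =
      {y : Fin 3 → ℂ | y 0 * y 1 + y 0 * y 2 + y 1 * y 2 = 0} := by
  set f : MvPolynomial (Fin 3) ℂ :=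
    X 0 ^ 2 - 2 * X 0 * X 1 + X 1 ^ 2 - 2 * X 0 * X 2 - 2 * X 1 * X 2 + X 2 ^ 2 with hf
  apply Set.Subset.antisymm
  · intro y hy
    have := hy (X 0 * X 1 + X 0 * X 2 + X 1 * X 2) ?_
    · simpa using this
    · rintro s ⟨t, x, ⟨hfx, -⟩, rfl⟩
      rw [eval_cm] at hfx
      have hg : grad f x = _ := grad_cm x
      simp only [map_add, map_mul, eval_X, Pi.smul_apply, hg, smul_eq_mul]
      simp only [Matrix.cons_val_zero, Matrix.cons_val_one, Matrix.head_cons,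
        Matrix.cons_val_two, Matrix.tail_cons, Matrix.cons_val]
      linear_combination (-4 * t ^ 2) * hfx
  · intro y hy
    simp only [Set.mem_setOf_eq] at hy
    intro p hp
    apply hp
    by_cases h0 : y = 0
    · refine ⟨0, ![0, -1/2, -1/2], ⟨?_, ?_⟩, ?_⟩
      · rw [eval_cm]; simp only [Matrix.cons_val_zero, Matrix.cons_val_one, Matrix.cons_val_two, Matrix.tail_cons, Matrix.head_cons]; norm_num
      · rw [grad_cm]
        intro h
        have := congrFun h 0
        simp only [Matrix.cons_val_zero, Matrix.cons_val_one, Matrix.cons_val_two, Matrix.tail_cons, Matrix.head_cons] at this; norm_num at this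
      · rw [h0]; simp
    · have hgy : grad f ![-(y 1 + y 2)/2, -(y 0 + y 2)/2, -(y 0 + y 1)/2] = (2:ℂ) • y := by
        rw [grad_cm]
        funext i
        fin_cases i <;> simp <;> ring
      refine ⟨1/2, ![-(y 1 + y 2)/2, -(y 0 + y 2)/2, -(y 0 + y 1)/2], ⟨?_, ?_⟩, ?_⟩
      · rw [eval_cm]
        simp only [Matrix.cons_val_zero, Matrix.cons_val_one, Matrix.head_cons,
          Matrix.cons_val_two, Matrix.tail_cons]
        linear_combination -hy
      · rw [hgy]
        exact smul_ne_zero two_ne_zero h0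
      · rw [hgy, smul_smul]
        norm_num
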